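/- The function g(ε) = e^{3ε}/((1 − e^{ε})(1 − e^{2ε})) + e^{ε}/(ε(1 − e^{ε})) (the regularized double sum minus its subdivergence) satisfies lim_{ε → 0, ε ≠ 0} ( g(ε) + 1/(2ε²) − 1/(4ε) ) = 3/8; equivalently, the constant term of the Laurent expansion of g at ε = 0 equals −(3/2)ζ(−1) + ζ(0)² = 3/8, which is the renormalized value of ζ(0,0). -/

import Mathlib

open Filter Complex Topology

/-- Degree-4 Taylor polynomial of exp. -/
noncomputable def zQ (e : ℂ) : ℂ := 1 + e + e ^ 2 / 2 + e ^ 3 / 6 + e ^ 4 / 24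

/-- Normalized remainder: (exp e - zQ e) / e^4. -/
noncomputable def zD (e : ℂ) : ℂ := (Complex.exp e - zQ e) / e ^ 4

/-- The numerator polynomial of the regularized expression, divided by e^4,
with d standing for zD e. -/
noncomputable def zP (e d : ℂ) : ℂ :=
  (3 : ℂ) +
  (11/2 : ℂ) * e +
  (199/36 : ℂ) * e^2 +
  (4 : ℂ) * e^3 +
  (53/24 : ℂ) * e^4 +
  (833/864 : ℂ) * e^5 +
  (73/216 : ℂ) * e^6 +
  (325/3456 : ℂ) * e^7 +
  (139/6912 : ℂ) * e^8 +
  (43/13824 : ℂ) * e^9 +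
  (1/3456 : ℂ) * e^10 +
  (-6 : ℂ) * e^2 * d +
  (7/3 : ℂ) * e^3 * d +
  (49/6 : ℂ) * e^4 * d +
  (91/12 : ℂ) * e^5 * d +
  (14/3 : ℂ) * e^6 * d +
  (49/24 : ℂ) * e^7 * d +
  (61/96 : ℂ) * e^8 * d +
  (9/64 : ℂ) * e^9 * d +
  (1/48 : ℂ) * e^10 * d +
  (4 : ℂ) * e^4 * d^2 +
  (-8 : ℂ) * e^5 * d^2 +
  (11/2 : ℂ) * e^7 * d^2 +
  (15/4 : ℂ) * e^8 * d^2 +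
  (11/8 : ℂ) * e^9 * d^2 +
  (1/2 : ℂ) * e^10 * d^2 +
  (2 : ℂ) * e^8 * d^3 +
  (-5 : ℂ) * e^9 * d^3 +
  (4 : ℂ) * e^10 * d^3

lemma zD_tendsto : Tendsto zD (nhdsWithin 0 {(0 : ℂ)}ᶜ) (nhds 0) := by
  apply squeeze_zero_norm' (a := fun e : ℂ => ‖e‖)
  · filter_upwards [self_mem_nhdsWithin,
      nhdsWithin_le_nhds (Metric.closedBall_mem_nhds (0 : ℂ) one_pos)] with e he hball
    have he0 : e ≠ 0 := he
    have hx : ‖e‖ ≤ 1 := by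
      simpa using Metric.mem_closedBall.mp hball
    have hb := Complex.exp_bound hx (n := 5) (by norm_num)
    have hQ : zQ e = ∑ m ∈ Finset.range 5, e ^ m / m.factorial := by
      simp [zQ, Finset.sum_range_succ, Nat.factorial]
    have hpos : (0 : ℝ) < ‖e‖ := norm_pos_iff.mpr he0
    have h4 : (0 : ℝ) < ‖e‖ ^ 4 := by positivity
    rw [zD, norm_div, norm_pow, div_le_iff₀ h4]
    calc ‖Complex.exp e - zQ e‖
        ≤ ‖e‖ ^ 5 * ((5 + 1 : ℕ) * ((Nat.factorial 5 : ℝ) * 5)⁻¹) := by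
          rw [hQ]; exact_mod_cast hb
      _ ≤ ‖e‖ ^ 5 := by
          have h5 : (0 : ℝ) ≤ ‖e‖ ^ 5 := by positivity
          norm_num [Nat.factorial]
          nlinarith [h5]
      _ = ‖e‖ * ‖e‖ ^ 4 := by ring
  · exact tendsto_norm_zero.comp (tendsto_id.mono_left nhdsWithin_le_nhds)

lemma hexp_eq {e : ℂ} (he : e ≠ 0) : Complex.exp e = zQ e + e ^ 4 * zD e := by
  rw [zD, mul_div_cancel₀ _ (pow_ne_zero 4 he)]; ring

lemma comp_lim {F : ℂ × ℂ → ℂ} (hF : Continuous F) :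
    Tendsto (fun e : ℂ => F (e, zD e)) (nhdsWithin 0 {(0 : ℂ)}ᶜ) (nhds (F (0, 0))) :=
  (hF.tendsto _).comp ((tendsto_id.mono_left nhdsWithin_le_nhds).prodMk_nhds zD_tendsto)

set_option maxHeartbeats 2000000 in
/-- Key algebraic identity. -/
lemma key_identity (e d u : ℂ) (he : e ≠ 0) (h1 : 1 - u ≠ 0) (h2 : 1 + u ≠ 0)
    (hu : u = zQ e + e ^ 4 * d) :
    u ^ 3 / ((1 - u) * (1 - u ^ 2)) + u / (e * (1 - u)) + 1 / (2 * e ^ 2) - 1 / (4 * e) =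
      zP e d / (4 * (1 + e / 2 + e ^ 2 / 6 + e ^ 3 / 24 + e ^ 3 * d) ^ 2 * (1 + u)) := by
  have hw0 : (1 + e / 2 + e ^ 2 / 6 + e ^ 3 / 24 + e ^ 3 * d) ≠ 0 := by
    intro h
    apply h1
    have h' : u - 1 = e * (1 + e / 2 + e ^ 2 / 6 + e ^ 3 / 24 + e ^ 3 * d) := by
      rw [hu, zQ]; ring
    rw [h, mul_zero] at h'
    linear_combination -h'
  have h12 : 1 - u ^ 2 ≠ 0 := by
    rw [show (1 : ℂ) - u ^ 2 = (1 - u) * (1 + u) by ring]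
    exact mul_ne_zero h1 h2
  have hD : (4 * (1 + e / 2 + e ^ 2 / 6 + e ^ 3 / 24 + e ^ 3 * d) ^ 2 * (1 + u)) ≠ 0 :=
    mul_ne_zero (mul_ne_zero (by norm_num) (pow_ne_zero 2 hw0)) h2
  have hp1 : (1 - u) * (1 - u ^ 2) ≠ 0 := mul_ne_zero h1 h12
  have hp2 : e * (1 - u) ≠ 0 := mul_ne_zero he h1
  have hp3 : (2 : ℂ) * e ^ 2 ≠ 0 := mul_ne_zero two_ne_zero (pow_ne_zero 2 he)
  have hp4 : (4 : ℂ) * e ≠ 0 := mul_ne_zero (by norm_num) he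
  rw [zP, div_add_div _ _ hp1 hp2, div_add_div _ _ (mul_ne_zero hp1 hp2) hp3,
    div_sub_div _ _ (mul_ne_zero (mul_ne_zero hp1 hp2) hp3) hp4,
    div_eq_div_iff (mul_ne_zero (mul_ne_zero (mul_ne_zero hp1 hp2) hp3) hp4) hD]
  subst hu
  simp only [zQ]
  ring

theorem renormalized_zeta_zero_zero :
    Filter.Tendsto
      (fun ε : ℂ =>
        (Complex.exp (3 * ε) / ((1 - Complex.exp ε) * (1 - Complex.exp (2 * ε))) +
          Complex.exp ε / (ε * (1 - Complex.exp ε)))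
        + 1 / (2 * ε ^ 2) - 1 / (4 * ε))
      (nhdsWithin 0 {(0 : ℂ)}ᶜ) (nhds (3 / 8)) ∧
    -(3 / 2) * riemannZeta (-1) + riemannZeta 0 ^ 2 = 3 / 8 := by
  constructor
  · -- numerator limit
    have hcP : Continuous fun p : ℂ × ℂ => zP p.1 p.2 := by unfold zP; fun_prop
    have hnum : Tendsto (fun e : ℂ => zP e (zD e)) (nhdsWithin 0 {(0 : ℂ)}ᶜ)
        (nhds 3) := by
      convert comp_lim hcP using 2
      norm_num [zP]
    -- denominator limit
    have hcD : Continuous fun p : ℂ × ℂ =>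
        4 * (1 + p.1 / 2 + p.1 ^ 2 / 6 + p.1 ^ 3 / 24 + p.1 ^ 3 * p.2) ^ 2 *
          (1 + Complex.exp p.1) := by fun_prop
    have hden : Tendsto (fun e : ℂ =>
        4 * (1 + e / 2 + e ^ 2 / 6 + e ^ 3 / 24 + e ^ 3 * zD e) ^ 2 *
          (1 + Complex.exp e)) (nhdsWithin 0 {(0 : ℂ)}ᶜ) (nhds 8) := by
      convert comp_lim hcD using 2
      norm_num [Complex.exp_zero]
    -- w tends to 1, so eventually nonzero
    have hcW : Continuous fun p : ℂ × ℂ =>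
        1 + p.1 / 2 + p.1 ^ 2 / 6 + p.1 ^ 3 / 24 + p.1 ^ 3 * p.2 := by fun_prop
    have hwt : Tendsto (fun e : ℂ =>
        1 + e / 2 + e ^ 2 / 6 + e ^ 3 / 24 + e ^ 3 * zD e)
        (nhdsWithin 0 {(0 : ℂ)}ᶜ) (nhds 1) := by
      convert comp_lim hcW using 2 <;> norm_num
    have hexpt : Tendsto (fun e : ℂ => 1 + Complex.exp e)
        (nhdsWithin 0 {(0 : ℂ)}ᶜ) (nhds 2) := by
      convert comp_lim (F := fun p : ℂ × ℂ => 1 + Complex.exp p.1) (by fun_prop) using 2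
      norm_num [Complex.exp_zero]
    have hlim : Tendsto (fun e : ℂ => zP e (zD e) /
        (4 * (1 + e / 2 + e ^ 2 / 6 + e ^ 3 / 24 + e ^ 3 * zD e) ^ 2 *
          (1 + Complex.exp e))) (nhdsWithin 0 {(0 : ℂ)}ᶜ) (nhds (3 / 8)) :=
      hnum.div hden (by norm_num : (8 : ℂ) ≠ 0)
    refine Tendsto.congr' ?_ hlim
    filter_upwards [self_mem_nhdsWithin, hwt.eventually_ne one_ne_zero,
      hexpt.eventually_ne two_ne_zero] with e he hw hx
    have he0 : e ≠ 0 := he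
    have h2 : 1 + Complex.exp e ≠ 0 := hx
    have h1 : 1 - Complex.exp e ≠ 0 := by
      intro h
      apply hw
      have hcalc : Complex.exp e - 1 =
          e * (1 + e / 2 + e ^ 2 / 6 + e ^ 3 / 24 + e ^ 3 * zD e) := by
        rw [hexp_eq he0, zQ]; ring
      have h0 : e * (1 + e / 2 + e ^ 2 / 6 + e ^ 3 / 24 + e ^ 3 * zD e) = 0 := by
        rw [← hcalc]; linear_combination -h
      rcases mul_eq_zero.mp h0 with h' | h'
      · exact absurd h' he0
      · exact h'
    have he2 : Complex.exp (2 * e) = Complex.exp e ^ 2 := by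
      rw [two_mul, Complex.exp_add]; ring
    have he3 : Complex.exp (3 * e) = Complex.exp e ^ 3 := by
      rw [show (3 : ℂ) * e = e + e + e by ring, Complex.exp_add, Complex.exp_add]; ring
    rw [he2, he3]
    exact .symm <| key_identity e (zD e) (Complex.exp e) he0 h1 h2 (hexp_eq he0)
  · have hz1 : riemannZeta (-1) = -1 / 12 := by
      rw [show (-1 : ℂ) = -(1 : ℕ) by norm_num, riemannZeta_neg_nat_eq_bernoulli']
      norm_num [bernoulli'_two]
    rw [hz1, riemannZeta_zero]
    norm_num
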